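/- Let G be a connected graph with σ₂(G) ≥ |V(G)| - k (k ≥ 2) and no spanning tree with at most k leaves, let P be a longest path with endpoints u, v, and let x be a vertex of G not on P. Then N(x) is disjoint from N(u)⁻ (predecessors along P of neighbors of u), and in fact N(x) = N(v). -/

import Mathlib

open SimpleGraph

section Aux
variable {V : Type*} {G : SimpleGraph V}

/-- A walk out of a vertex with no neighbors goes nowhere. -/
lemma walk_isolated {T : SimpleGraph V} {a b : V} (W : T.Walk a b)
    (h : ∀ y, ¬T.Adj a y) : a = b := by
  cases W with
  | nil => rfl
  | cons h' W' => exact absurd h' (h _)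

lemma walk_lock {T : SimpleGraph V} {x w : V}
    (hx : T.neighborSet x = {w}) (hw : T.neighborSet w = {x}) :
    ∀ {a b : V} (_ : T.Walk a b), a = x ∨ a = w → b = x ∨ b = w := by
  intro a b W
  induction W with
  | nil => exact id
  | @cons a c b h W' ih =>
    rintro (rfl | rfl)
    · have : c ∈ T.neighborSet a := h
      rw [hx] at this
      exact ih (Or.inr this)
    · have : c ∈ T.neighborSet a := h
      rw [hw] at this
      exact ih (Or.inl this)

/-- In a path of length ≥ 2, the edge joining the two endpoints is not used. -/
lemma edge_ends_not_mem {a b : V} {q : G.Walk a b} (hq : q.IsPath) (h2 : 2 ≤ q.length) :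
    s(a, b) ∉ q.edges := by
  intro hmem
  cases q with
  | nil => simp at hmem
  | @cons _ c _ h q' =>
    rw [Walk.cons_isPath_iff] at hq
    rw [Walk.edges_cons, List.mem_cons] at hmem
    rcases hmem with heq | hmem
    · rw [Sym2.eq_iff] at heq
      rcases heq with ⟨-, rfl⟩ | ⟨rfl, rfl⟩
      · have : q' = Walk.nil := (Walk.isPath_iff_eq_nil (p := q')).mp hq.1
        subst this
        simp at h2
      · exact G.irrefl h
    · exact hq.2 (q'.fst_mem_support_of_mem_edges hmem)

/-- Split a walk at position `i`: pieces described by `take`/`drop` of the support. -/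
lemma exists_split : ∀ {u v : V} (p : G.Walk u v) (i : ℕ), i + 1 ≤ p.length →
    ∃ (a b : V) (q1 : G.Walk u a) (q2 : G.Walk b v), G.Adj a b ∧ s(a, b) ∈ p.edges ∧
      q1.support = p.support.take (i+1) ∧ q2.support = p.support.drop (i+1) := by
  intro u v p
  induction p with
  | nil => intro i hi; simp at hi
  | @cons u c v h q ih =>
    intro i hi
    cases i with
    | zero =>
      refine ⟨u, c, Walk.nil, q, h, by simp, ?_, ?_⟩
      · simp [Walk.support_cons]
      · simp [Walk.support_cons]
    | succ j =>
      have hj : j + 1 ≤ q.length := by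
        simpa [Walk.length_cons, Nat.succ_le_succ_iff] using hi
      obtain ⟨a, b, q1, q2, hab, hmem, h1, h2⟩ := ih j hj
      exact ⟨a, b, Walk.cons h q1, q2, hab, by simp [Walk.edges_cons, hmem],
        by simp [Walk.support_cons, h1], by simp [Walk.support_cons, h2]⟩

/-- Adding an edge between two components of an acyclic graph keeps it acyclic. -/
lemma addcross {T : SimpleGraph V} (hT : T.IsAcyclic) {a b : V} (hab : a ≠ b)
    (hnr : ¬T.Reachable a b) : (T ⊔ fromEdgeSet {s(a, b)}).IsAcyclic := by
  set T' := T ⊔ fromEdgeSet {s(a, b)} with hT'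
  have hTnadj : ¬T.Adj a b := fun h => hnr h.reachable
  have key : T' \ fromEdgeSet {s(a, b)} = T := by
    ext c d
    simp only [sdiff_adj, hT', sup_adj, fromEdgeSet_adj, Set.mem_singleton_iff]
    constructor
    · rintro ⟨hcd | ⟨he, hne⟩, hn⟩
      · exact hcd
      · exact absurd ⟨he, hne⟩ hn
    · intro hcd
      refine ⟨Or.inl hcd, ?_⟩
      rintro ⟨he, -⟩
      rw [Sym2.eq_iff] at he
      rcases he with ⟨rfl, rfl⟩ | ⟨rfl, rfl⟩
      · exact hTnadj hcd
      · exact hTnadj hcd.symm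
  have hadj' : T'.Adj a b := by
    rw [hT', sup_adj, fromEdgeSet_adj]
    exact Or.inr ⟨rfl, hab⟩
  have hbridge : T'.IsBridge s(a, b) := by
    rw [isBridge_iff, deleteEdges, key]
    exact hnr
  intro z c hc
  have hnotmem : s(a, b) ∉ c.edges :=
    (isBridge_iff_adj_and_forall_cycle_notMem hadj').mp hbridge c hc
  have hsub : ∀ e ∈ c.edges, e ∈ T.edgeSet := by
    intro e he
    have : e ∈ T'.edgeSet := c.edges_subset_edgeSet he
    rw [hT', edgeSet_sup, edgeSet_fromEdgeSet] at this
    rcases this with h1 | h2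
    · exact h1
    · exfalso
      have : e = s(a, b) := Set.mem_singleton_iff.mp h2.1
      rw [this] at he
      exact hnotmem he
  exact hT _ (hc.transfer hsub)

/-- The graph consisting of the edges of a path is acyclic. -/
lemma forest_acyclic : ∀ {u v : V} (q : G.Walk u v), q.IsPath →
    (fromEdgeSet {e | e ∈ q.edges}).IsAcyclic := by
  intro u v q
  induction q with
  | @nil w =>
    intro _
    have : fromEdgeSet {e : Sym2 V | e ∈ (Walk.nil : G.Walk w w).edges} = ⊥ := by
      rw [← fromEdgeSet_empty]
      congr 1
      simp [Walk.edges_nil]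
    rw [this]
    exact isAcyclic_bot
  | @cons u c v h q ih =>
    intro hp
    rw [Walk.cons_isPath_iff] at hp
    have hset : {e : Sym2 V | e ∈ (Walk.cons h q).edges} =
        {e | e ∈ q.edges} ∪ {s(u, c)} := by
      ext e
      simp [Walk.edges_cons, or_comm]
    rw [hset, fromEdgeSet_union]
    have hiso : ∀ y, ¬(fromEdgeSet {e | e ∈ q.edges}).Adj u y := by
      intro y hy
      rw [fromEdgeSet_adj] at hy
      exact hp.2 (q.fst_mem_support_of_mem_edges hy.1)
    have hnr : ¬(fromEdgeSet {e | e ∈ q.edges}).Reachable u c := by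
      rintro ⟨W⟩
      exact h.ne (walk_isolated W hiso)
    exact addcross (ih hp.1) h.ne hnr

/-- Any acyclic subgraph of a finite connected graph extends to a spanning tree. -/
lemma grow [Fintype V] (hG : G.Connected) :
    ∀ (N : ℕ) (T : SimpleGraph V) (u₀ : V), T ≤ G → T.IsAcyclic →
    ({z | ¬ T.Reachable u₀ z}.ncard ≤ N) → ∃ T', T ≤ T' ∧ T' ≤ G ∧ T'.IsTree := by
  intro N
  induction N with
  | zero =>
    intro T u₀ hTG hTa hcard
    have hempty : {z | ¬ T.Reachable u₀ z} = ∅ :=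
      (Set.ncard_eq_zero (Set.toFinite _)).mp (Nat.le_zero.mp hcard)
    have hreach : ∀ z, T.Reachable u₀ z := by
      intro z
      by_contra hz
      have : z ∈ {z | ¬ T.Reachable u₀ z} := hz
      rw [hempty] at this
      exact this
    have : Nonempty V := ⟨u₀⟩
    exact ⟨T, le_refl _, hTG, ⟨⟨fun a b => (hreach a).symm.trans (hreach b)⟩, hTa⟩⟩
  | succ N ih =>
    intro T u₀ hTG hTa hcard
    by_cases hz : ∀ z, T.Reachable u₀ z
    · have : Nonempty V := ⟨u₀⟩
      exact ⟨T, le_refl _, hTG, ⟨⟨fun a b => (hz a).symm.trans (hz b)⟩, hTa⟩⟩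
    · push_neg at hz
      obtain ⟨z, hzr⟩ := hz
      obtain ⟨W⟩ := hG.preconnected u₀ z
      obtain ⟨d, -, hdS, hdnS⟩ := W.exists_boundary_dart {y | T.Reachable u₀ y}
        (Set.mem_setOf.mpr (Reachable.refl u₀)) hzr
      set a := d.fst with ha
      set b := d.snd with hb
      have hGab : G.Adj a b := d.adj
      have hab : a ≠ b := fun hh => hdnS (hh ▸ hdS)
      have hnr : ¬T.Reachable a b := fun hr => hdnS ((Set.mem_setOf.mp hdS).trans hr)
      set T' := T ⊔ fromEdgeSet {s(a, b)} with hT'def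
      have hT'G : T' ≤ G := by
        refine sup_le hTG ?_
        intro c e hce
        rw [fromEdgeSet_adj, Set.mem_singleton_iff, Sym2.eq_iff] at hce
        rcases hce.1 with ⟨rfl, rfl⟩ | ⟨rfl, rfl⟩
        · exact hGab
        · exact hGab.symm
      have hT'a : T'.IsAcyclic := addcross hTa hab hnr
      have hTT' : T ≤ T' := le_sup_left
      have hssub : {z | ¬ T'.Reachable u₀ z} ⊂ {z | ¬ T.Reachable u₀ z} := by
        constructor
        · intro y hy
          exact fun hr => hy (hr.mono hTT')
        · intro hsub
          have hbmem : b ∈ {z | ¬ T.Reachable u₀ z} := hdnS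
          have : b ∈ {z | ¬ T'.Reachable u₀ z} := hsub hbmem
          apply this
          have hadj' : T'.Adj a b := by
            rw [hT'def, sup_adj, fromEdgeSet_adj]
            exact Or.inr ⟨rfl, hab⟩
          exact ((Set.mem_setOf.mp hdS).mono hTT').trans hadj'.reachable
      have hlt : {z | ¬ T'.Reachable u₀ z}.ncard < {z | ¬ T.Reachable u₀ z}.ncard :=
        Set.ncard_lt_ncard hssub (Set.toFinite _)
      obtain ⟨T'', h1, h2, h3⟩ := ih T' u₀ hT'G hT'a (by omega)
      exact ⟨T'', hTT'.trans h1, h2, h3⟩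

lemma exists_split' {u v : V} (p : G.Walk u v) (i : ℕ) (hi : i + 1 ≤ p.length) :
    ∃ (a b : V) (q1 : G.Walk u a) (q2 : G.Walk b v), G.Adj a b ∧ s(a, b) ∈ p.edges ∧
      q1.support = p.support.take (i+1) ∧ q2.support = p.support.drop (i+1) ∧
      a = p.support.getD i u ∧ b = p.support.getD (i+1) u := by
  obtain ⟨a, b, q1, q2, hab, hmem, h1, h2⟩ := exists_split p i hi
  have hSlen : p.support.length = p.length + 1 := p.length_support
  have hi1 : i + 1 < p.support.length := by omega
  have hi0 : i < p.support.length := by omega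
  refine ⟨a, b, q1, q2, hab, hmem, h1, h2, ?_, ?_⟩
  · have hq1len : q1.support.length = i + 1 := by rw [h1, List.length_take]; omega
    have h3 : a = q1.support.getLast (by simp) := (q1.getLast_support).symm
    rw [List.getLast_eq_getElem] at h3
    have h4 : q1.support[q1.support.length - 1]'(by simp) =
        (p.support.take (i+1))[q1.support.length - 1]'(by rw [← h1]; simp) :=
      List.getElem_of_eq h1 _
    rw [h4] at h3
    rw [h3, List.getD_eq_getElem _ _ hi0]
    simp_rw [hq1len]
    simp [List.getElem_take]
  · have h3 : p.support.drop (i+1) = b :: q2.support.tail := by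
      rw [← h2]; exact q2.support_eq_cons
    have h4 : (p.support.drop (i+1))[0]'(by rw [List.length_drop]; omega) = b := by
      rw [List.getElem_of_eq h3]; rfl
    rw [List.getD_eq_getElem _ _ hi1, ← h4, List.getElem_drop]

section Longest

variable {u v : V} {p : G.Walk u v}

/-- Rotation-extension: if `u` is adjacent to the successor of `a` on the path and an outside
vertex `x` is adjacent to `a`, the path can be lengthened. -/
lemma rotation_ext (hp : p.IsPath)
    (hlongest : ∀ (a b : V) (q : G.Walk a b), q.IsPath → q.length ≤ p.length)
    {x : V} (hx : x ∉ p.support) (i : ℕ) (hi : i + 1 ≤ p.length)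
    (hub : G.Adj u (p.support.getD (i+1) u)) :
    ¬ G.Adj x (p.support.getD i u) := by
  intro hxa
  obtain ⟨a, b, q1, q2, hab, hmem, h1, h2, ha, hb⟩ := exists_split' p i hi
  rw [← hb] at hub
  rw [← ha] at hxa
  have hperm : ((p.support.take (i+1)).reverse ++ p.support.drop (i+1)).Perm p.support := by
    have h5 : ((p.support.take (i+1)).reverse ++ p.support.drop (i+1)).Perm
        (p.support.take (i+1) ++ p.support.drop (i+1)) :=
      (List.reverse_perm _).append_right _
    rwa [List.take_append_drop] at h5
  set q : G.Walk x v := Walk.cons hxa (q1.reverse.append (Walk.cons hub q2)) with hq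
  have hsupp : q.support = x :: ((p.support.take (i+1)).reverse ++ p.support.drop (i+1)) := by
    rw [hq, Walk.support_cons, Walk.support_append, Walk.support_reverse, h1,
      Walk.support_cons, List.tail_cons, h2]
  have hqpath : q.IsPath := by
    apply Walk.IsPath.mk'
    rw [hsupp]
    refine List.Nodup.cons ?_ (hperm.nodup_iff.mpr hp.support_nodup)
    intro hmem'
    exact hx (hperm.mem_iff.mp hmem')
  have hlen : q.length = p.length + 1 := by
    have := congrArg List.length hsupp
    rw [q.length_support, List.length_cons, List.length_append, List.length_reverse,
      List.length_take, List.length_drop, p.length_support] at this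
    omega
  have := hlongest _ _ q hqpath
  omega

end Longest

lemma length_rotate [DecidableEq V] {w y : V} {c : G.Walk w w} (h : y ∈ c.support) :
    (c.rotate y h).length = c.length := by
  have h1 := congrArg Walk.length (c.take_spec h)
  rw [Walk.length_append] at h1
  rw [show c.rotate y h = (c.dropUntil y h).append (c.takeUntil y h) from rfl,
    Walk.length_append]
  omega

section Longest

variable {u v : V} {p : G.Walk u v}

lemma no_outside_adj_start (hp : p.IsPath)
    (hlongest : ∀ (a b : V) (q : G.Walk a b), q.IsPath → q.length ≤ p.length)
    {z : V} (hz : z ∉ p.support) : ¬G.Adj z u := by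
  intro h
  have hq : (Walk.cons h p).IsPath := hp.cons hz
  have := hlongest _ _ _ hq
  rw [Walk.length_cons] at this
  omega

lemma no_outside_adj_end (hp : p.IsPath)
    (hlongest : ∀ (a b : V) (q : G.Walk a b), q.IsPath → q.length ≤ p.length)
    {z : V} (hz : z ∉ p.support) : ¬G.Adj z v := by
  intro h
  have hq : (p.concat h.symm).IsPath := by
    apply Walk.IsPath.mk'
    rw [Walk.support_concat]
    simp only [List.concat_eq_append, List.nodup_append, List.nodup_cons, List.not_mem_nil,
      not_false_iff, List.nodup_nil, and_true, true_and]
    refine ⟨hp.support_nodup, ?_⟩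
    intro t ht
    simp only [List.mem_singleton]
    rintro _ rfl rfl
    exact hz ht
  have := hlongest _ _ _ hq
  rw [Walk.length_concat] at this
  omega

lemma crossing (hconn : G.Connected) (hp : p.IsPath)
    (hlongest : ∀ (a b : V) (q : G.Walk a b), q.IsPath → q.length ≤ p.length)
    {x : V} (hx : x ∉ p.support) (i : ℕ) (hi : i + 1 ≤ p.length)
    (hub : G.Adj u (p.support.getD (i+1) u)) (hva : G.Adj v (p.support.getD i u)) : False := by
  classical
  have hSlen : p.support.length = p.length + 1 := p.length_support
  -- a boundary edge out of the path
  obtain ⟨W⟩ := hconn.preconnected u x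
  obtain ⟨d, -, hdS, hdnS⟩ := W.exists_boundary_dart {y | y ∈ p.support}
    (Set.mem_setOf.mpr p.start_mem_support) hx
  set y := d.fst
  set z := d.snd
  have hyz : G.Adj y z := d.adj
  have hyS : y ∈ p.support := hdS
  have hzS : z ∉ p.support := hdnS
  have hyu : y ≠ u := by
    rintro rfl
    exact no_outside_adj_start hp hlongest hzS hyz.symm
  have hyv : y ≠ v := by
    rintro rfl
    exact no_outside_adj_end hp hlongest hzS hyz.symm
  -- y is an interior vertex: y = support[j] with 1 ≤ j ≤ m - 1
  have hS0 : p.support[0]'(by omega) = u := by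
    rw [List.getElem_of_eq p.support_eq_cons]; rfl
  have hSm : p.support[p.length]'(by omega) = v := by
    have h1 := p.getLast_support
    rw [List.getLast_eq_getElem] at h1
    refine Eq.trans ?_ h1
    congr 1
    omega
  obtain ⟨j, hj, hjy⟩ := List.mem_iff_getElem.mp hyS
  have hj0 : j ≠ 0 := by
    rintro rfl
    exact hyu (by rw [← hjy]; exact hS0)
  have hjm : j ≠ p.length := by
    rintro rfl
    exact hyv (by rw [← hjy]; exact hSm)
  have hm2 : 2 ≤ p.length := by omega
  -- build the spanning cycle
  obtain ⟨a, b, q1, q2, hab, hmem, h1, h2, ha, hb⟩ := exists_split' p i hi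
  rw [← hb] at hub
  rw [← ha] at hva
  set inner : G.Walk u b := q1.append (Walk.cons hva.symm q2.reverse) with hinner
  have hinner_supp : inner.support =
      p.support.take (i+1) ++ (p.support.drop (i+1)).reverse := by
    rw [hinner, Walk.support_append, h1, Walk.support_cons, List.tail_cons,
      Walk.support_reverse, h2]
  have hperm : (p.support.take (i+1) ++ (p.support.drop (i+1)).reverse).Perm p.support := by
    have h5 : (p.support.take (i+1) ++ (p.support.drop (i+1)).reverse).Perm
        (p.support.take (i+1) ++ p.support.drop (i+1)) :=
      List.Perm.append_left _ (List.reverse_perm _)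
    rwa [List.take_append_drop] at h5
  have hinner_nodup : inner.support.Nodup := by
    rw [hinner_supp]
    exact hperm.nodup_iff.mpr hp.support_nodup
  have innerPath : inner.IsPath := Walk.IsPath.mk' hinner_nodup
  have hinnerlen : inner.length = p.length := by
    have h6 := congrArg List.length hinner_supp
    rw [inner.length_support, List.length_append, List.length_take, List.length_reverse,
      List.length_drop] at h6
    omega
  have hinner_mem : ∀ t, t ∈ inner.support ↔ t ∈ p.support := by
    intro t; rw [hinner_supp]; exact hperm.mem_iff
  have hnotmem : s(b, u) ∉ inner.edges := by
    rw [Sym2.eq_swap]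
    exact edge_ends_not_mem innerPath (by omega)
  set c : G.Walk b b := Walk.cons hub.symm inner with hc_def
  have hc : c.IsCycle := (Walk.cons_isCycle_iff inner hub.symm).mpr ⟨innerPath, hnotmem⟩
  have hy_in_c : y ∈ c.support := by
    rw [hc_def, Walk.support_cons]
    exact List.mem_cons_of_mem _ ((hinner_mem y).mpr hyS)
  set c₂ := c.rotate y hy_in_c with hc₂_def
  have hc₂ : c₂.IsCycle := hc.rotate hy_in_c
  have hc₂len : c₂.length = p.length + 1 := by
    rw [hc₂_def, length_rotate, hc_def, Walk.length_cons, hinnerlen]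
  have hc₂tail : ∀ t, t ∈ c₂.support.tail → t ∈ p.support := by
    intro t ht
    have h7 : t ∈ c.support.tail := (Walk.support_rotate c y hy_in_c).mem_iff.mp ht
    rw [hc_def, Walk.support_cons, List.tail_cons] at h7
    exact (hinner_mem t).mp h7
  have hnn : ¬c₂.Nil := by
    rw [Walk.not_nil_iff_lt_length]; omega
  obtain ⟨w1, hadj1, q, hq⟩ := Walk.not_nil_iff.mp hnn
  have hqsupp : q.support = c₂.support.tail := by
    rw [hq, Walk.support_cons, List.tail_cons]
  have hqpath : q.IsPath := Walk.IsPath.mk' (hqsupp ▸ hc₂.2)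
  have hqlen : q.length = p.length := by
    have := congrArg Walk.length hq
    rw [Walk.length_cons] at this
    omega
  set final : G.Walk z w1 := Walk.cons hyz.symm q.reverse with hfinal
  have hfinalpath : final.IsPath := by
    apply Walk.IsPath.mk'
    rw [hfinal, Walk.support_cons, Walk.support_reverse]
    refine List.Nodup.cons ?_ (List.nodup_reverse.mpr hqpath.support_nodup)
    intro hmem'
    rw [List.mem_reverse] at hmem'
    exact hzS (hc₂tail z (hqsupp ▸ hmem'))
  have := hlongest _ _ final hfinalpath
  rw [hfinal, Walk.length_cons, Walk.length_reverse] at this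
  omega

end Longest

end Aux

/-- The degree of a vertex, as the cardinality of its neighbor set. -/
noncomputable def SimpleGraph.deg' {V : Type*} (G : SimpleGraph V) (u : V) : ℕ :=
  (G.neighborSet u).ncard

/-- `G` has a spanning tree with at most `k` leaves. -/
def SimpleGraph.HasSpanningKEndedTree {V : Type*} (G : SimpleGraph V) (k : ℕ) : Prop :=
  ∃ T : SimpleGraph V, T ≤ G ∧ T.IsTree ∧ {x : V | (T.neighborSet x).ncard = 1}.ncard ≤ k

theorem stmt_13 {V : Type*} [Fintype V] (G : SimpleGraph V) (k : ℕ) (hk : 2 ≤ k)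
    (hconn : G.Connected)
    (hσ : ∀ u v : V, u ≠ v → ¬G.Adj u v →
      (Fintype.card V : ℤ) - k ≤ (G.deg' u : ℤ) + (G.deg' v : ℤ))
    (hnotree : ¬G.HasSpanningKEndedTree k)
    (u v : V) (p : G.Walk u v) (hp : p.IsPath)
    (hlongest : ∀ (a b : V) (q : G.Walk a b), q.IsPath → q.length ≤ p.length)
    (x : V) (hx : x ∉ p.support) :
    (∀ i : ℕ, (h : i + 1 < p.support.length) →
      G.Adj u (p.support[i + 1]'h) →
      ¬G.Adj x (p.support[i]'(Nat.lt_of_succ_lt h))) ∧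
    G.neighborSet x = G.neighborSet v := by
  classical
  have hSlen : p.support.length = p.length + 1 := p.length_support
  have hnodup : p.support.Nodup := hp.support_nodup
  have hinj : ∀ {i j : ℕ} (hi : i < p.support.length) (hj : j < p.support.length),
      p.support[i]'hi = p.support[j]'hj → i = j := by
    intro i j hi hj h
    exact (hnodup.getElem_inj_iff).mp h
  have hS0 : p.support[0]'(by omega) = u := by
    rw [List.getElem_of_eq p.support_eq_cons]; rfl
  have hSm : p.support[p.length]'(by omega) = v := by
    have h1 := p.getLast_support
    rw [List.getLast_eq_getElem] at h1
    refine Eq.trans ?_ h1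
    congr 1
    omega
  have hxu : x ≠ u := fun h => hx (h ▸ p.start_mem_support)
  have hxv : x ≠ v := fun h => hx (h ▸ p.end_mem_support)
  have hxadju : ¬G.Adj x u := no_outside_adj_start hp hlongest hx
  have hxadjv : ¬G.Adj x v := no_outside_adj_end hp hlongest hx
  -- part 1
  have part1 : ∀ i : ℕ, (h : i + 1 < p.support.length) →
      G.Adj u (p.support[i + 1]'h) →
      ¬G.Adj x (p.support[i]'(Nat.lt_of_succ_lt h)) := by
    intro i h hadj
    have hi : i + 1 ≤ p.length := by omega
    have e1 : p.support.getD (i+1) u = p.support[i+1]'h := List.getD_eq_getElem _ _ h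
    have e2 : p.support.getD i u = p.support[i]'(Nat.lt_of_succ_lt h) :=
      List.getD_eq_getElem _ _ _
    rw [← e1] at hadj
    rw [← e2]
    exact rotation_ext hp hlongest hx i hi hadj
  -- m ≥ 1
  have hm1 : 1 ≤ p.length := by
    obtain ⟨W⟩ := hconn.preconnected x u
    rcases Nat.eq_zero_or_pos ((W.toPath : G.Walk x u).length) with h0 | hpos
    · exact absurd (Walk.eq_of_length_eq_zero h0) hxu
    · exact le_trans hpos (hlongest _ _ _ W.toPath.2)
  have huv : u ≠ v := by
    intro h
    have : (0 : ℕ) = p.length := hinj (by omega) (by omega) (by rw [hS0, hSm]; exact h)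
    omega
  -- consecutive vertices on the path are adjacent
  have hconsec : ∀ j, j + 1 ≤ p.length →
      G.Adj (p.support.getD j u) (p.support.getD (j+1) u) := by
    intro j hj
    obtain ⟨a, b, q1, q2, hab, -, -, -, ha, hb⟩ := exists_split' p j hj
    rw [ha, hb] at hab
    exact hab
  have hgetDm : p.support.getD p.length u = v := by
    rw [List.getD_eq_getElem _ _ (by omega)]
    exact hSm
  have hadjuv : ¬G.Adj u v := by
    intro hadj
    have hi1 : p.length - 1 + 1 = p.length := by omega
    apply crossing hconn hp hlongest hx (p.length - 1) (by omega)
    · rw [hi1, hgetDm]; exact hadj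
    · have := hconsec (p.length - 1) (by omega)
      rw [hi1, hgetDm] at this
      exact this.symm
  -- index sets
  set Iu : Finset ℕ :=
    (Finset.range p.length).filter (fun i => G.Adj u (p.support.getD (i+1) u)) with hIu_def
  set Iv : Finset ℕ :=
    (Finset.range p.length).filter (fun i => G.Adj v (p.support.getD i u)) with hIv_def
  have hdegu : G.deg' u = Iu.card := by
    rw [SimpleGraph.deg']
    have hset : G.neighborSet u = ↑(Iu.image (fun i => p.support.getD (i+1) u)) := by
      ext t
      simp only [mem_neighborSet, Finset.coe_image, Set.mem_image, Finset.mem_coe,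
        hIu_def, Finset.mem_filter, Finset.mem_range]
      constructor
      · intro ht
        have htS : t ∈ p.support := by
          by_contra h'
          exact no_outside_adj_start hp hlongest h' ht.symm
        obtain ⟨j, hj, hjt⟩ := List.mem_iff_getElem.mp htS
        have hj0 : j ≠ 0 := by
          rintro rfl
          apply G.irrefl (v := u)
          have : t = u := by rw [← hjt]; exact hS0
          rwa [this] at ht
        refine ⟨j - 1, ⟨by omega, ?_⟩, ?_⟩
        · have e3 : p.support.getD (j - 1 + 1) u = t := by
            rw [List.getD_eq_getElem _ _ (by omega)]
            rw [← hjt]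
            congr 1
            omega
          rwa [e3]
        · rw [List.getD_eq_getElem _ _ (by omega)]
          rw [← hjt]
          congr 1
          omega
      · rintro ⟨i, ⟨hi, hadj⟩, rfl⟩
        exact hadj
    rw [hset, Set.ncard_coe_finset]
    apply Finset.card_image_of_injOn
    intro i hi j hj hij
    simp only [hIu_def, Finset.mem_coe, Finset.mem_filter, Finset.mem_range] at hi hj
    dsimp only at hij
    rw [List.getD_eq_getElem _ _ (by omega : i + 1 < p.support.length),
      List.getD_eq_getElem _ _ (by omega : j + 1 < p.support.length)] at hij
    have := hinj (i := i + 1) (j := j + 1) (by omega) (by omega) hij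
    omega
  have hdegv : G.deg' v = Iv.card := by
    rw [SimpleGraph.deg']
    have hset : G.neighborSet v = ↑(Iv.image (fun i => p.support.getD i u)) := by
      ext t
      simp only [mem_neighborSet, Finset.coe_image, Set.mem_image, Finset.mem_coe,
        hIv_def, Finset.mem_filter, Finset.mem_range]
      constructor
      · intro ht
        have htS : t ∈ p.support := by
          by_contra h'
          exact no_outside_adj_end hp hlongest h' ht.symm
        obtain ⟨j, hj, hjt⟩ := List.mem_iff_getElem.mp htS
        have hjm : j ≠ p.length := by
          rintro rfl
          apply G.irrefl (v := v)
          have : t = v := by rw [← hjt]; exact hSm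
          rwa [this] at ht
        refine ⟨j, ⟨by omega, ?_⟩, ?_⟩
        · rw [List.getD_eq_getElem _ _ (by omega), hjt]
          exact ht
        · rw [List.getD_eq_getElem _ _ (by omega)]
          exact hjt
      · rintro ⟨i, ⟨hi, hadj⟩, rfl⟩
        exact hadj
    rw [hset, Set.ncard_coe_finset]
    apply Finset.card_image_of_injOn
    intro i hi j hj hij
    simp only [hIv_def, Finset.mem_coe, Finset.mem_filter, Finset.mem_range] at hi hj
    dsimp only at hij
    rw [List.getD_eq_getElem _ _ (by omega : i < p.support.length),
      List.getD_eq_getElem _ _ (by omega : j < p.support.length)] at hij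
    exact hinj (by omega) (by omega) hij
  have hdisj : Disjoint Iu Iv := by
    rw [Finset.disjoint_left]
    intro i hiu hiv
    simp only [hIu_def, hIv_def, Finset.mem_filter, Finset.mem_range] at hiu hiv
    exact crossing hconn hp hlongest hx i (by omega) hiu.2 hiv.2
  have hsub_range : Iu ∪ Iv ⊆ Finset.range p.length := by
    apply Finset.union_subset <;> exact Finset.filter_subset _ _
  have hcard_union : (Iu ∪ Iv).card = G.deg' u + G.deg' v := by
    rw [Finset.card_union_of_disjoint hdisj, hdegu, hdegv]
  have hle_m : G.deg' u + G.deg' v ≤ p.length := by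
    rw [← hcard_union]
    calc (Iu ∪ Iv).card ≤ (Finset.range p.length).card := Finset.card_le_card hsub_range
    _ = p.length := Finset.card_range _
  -- vertices off the path
  set R : Finset V := Finset.univ \ p.support.toFinset with hR_def
  have hScard : p.support.toFinset.card = p.length + 1 := by
    rw [List.toFinset_card_of_nodup hnodup, hSlen]
  have hRcard : R.card = Fintype.card V - (p.length + 1) := by
    rw [hR_def, Finset.card_sdiff_of_subset (Finset.subset_univ _), hScard, Finset.card_univ]
  have hxR : x ∈ R := by
    rw [hR_def, Finset.mem_sdiff]
    exact ⟨Finset.mem_univ _, fun h => hx (List.mem_toFinset.mp h)⟩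
  have hn_ge : p.length + 2 ≤ Fintype.card V := by
    have h8 : insert x p.support.toFinset ⊆ Finset.univ := Finset.subset_univ _
    have h9 := Finset.card_le_card h8
    rw [Finset.card_insert_of_notMem (fun h => hx (List.mem_toFinset.mp h)), hScard,
      Finset.card_univ] at h9
    omega
  -- the path as a forest
  set F : SimpleGraph V := fromEdgeSet {e | e ∈ p.edges} with hF_def
  have hF_le : F ≤ G := by
    intro c d h
    rw [hF_def, fromEdgeSet_adj] at h
    exact (G.mem_edgeSet).mp (p.edges_subset_edgeSet h.1)
  have hFa : F.IsAcyclic := forest_acyclic p hp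
  -- interior path vertices cannot be leaves of any tree containing F
  have hFdeg : ∀ t, t ∈ p.support → t ≠ u → t ≠ v → ∀ T' : SimpleGraph V, F ≤ T' →
      (T'.neighborSet t).ncard ≠ 1 := by
    intro t htS htu htv T' hFT' hleaf
    obtain ⟨j, hj, hjt⟩ := List.mem_iff_getElem.mp htS
    have hj0 : j ≠ 0 := by
      rintro rfl
      exact htu (by rw [← hjt]; exact hS0)
    have hjm : j ≠ p.length := by
      rintro rfl
      exact htv (by rw [← hjt]; exact hSm)
    obtain ⟨a1, b1, _, _, -, hmem1, -, -, ha1, hb1⟩ := exists_split' p (j-1) (by omega)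
    obtain ⟨a2, b2, _, _, -, hmem2, -, -, ha2, hb2⟩ := exists_split' p j (by omega)
    have hb1t : b1 = t := by
      rw [hb1, List.getD_eq_getElem _ _ (by omega : j - 1 + 1 < p.support.length), ← hjt]
      congr 1
      omega
    have ha2t : a2 = t := by
      rw [ha2, List.getD_eq_getElem _ _ (by omega : j < p.support.length), hjt]
    have ha1v : a1 = p.support[j-1]'(by omega) := by
      rw [ha1, List.getD_eq_getElem _ _ (by omega : j - 1 < p.support.length)]
    have hb2v : b2 = p.support[j+1]'(by omega) := by
      rw [hb2, List.getD_eq_getElem _ _ (by omega : j + 1 < p.support.length)]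
    have hne1 : t ≠ a1 := by
      rw [ha1v]
      intro h
      have := hinj (i := j) (j := j - 1) (by omega) (by omega) (by rw [hjt]; exact h)
      omega
    have hne2 : t ≠ b2 := by
      rw [hb2v]
      intro h
      have := hinj (i := j) (j := j + 1) (by omega) (by omega) (by rw [hjt]; exact h)
      omega
    have hne3 : a1 ≠ b2 := by
      rw [ha1v, hb2v]
      intro h
      have := hinj (i := j - 1) (j := j + 1) (by omega) (by omega) h
      omega
    have hadj1 : T'.Adj t a1 := by
      apply hFT'
      rw [hF_def, fromEdgeSet_adj]
      refine ⟨?_, hne1⟩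
      rw [Sym2.eq_swap]
      rw [hb1t] at hmem1
      exact hmem1
    have hadj2 : T'.Adj t b2 := by
      apply hFT'
      rw [hF_def, fromEdgeSet_adj]
      refine ⟨?_, hne2⟩
      rw [ha2t] at hmem2
      exact hmem2
    have hpair : {a1, b2} ⊆ T'.neighborSet t := by
      intro s hs
      rcases hs with rfl | hs
      · exact hadj1
      · rw [Set.mem_singleton_iff] at hs
        rw [hs]
        exact hadj2
    have h2le : 2 ≤ (T'.neighborSet t).ncard := by
      have := Set.ncard_le_ncard hpair (Set.toFinite _)
      rwa [Set.ncard_pair hne3] at this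
    omega
  -- spanning tree containing the path: bounds the number of off-path vertices
  obtain ⟨T, hFT, hTG, hTree⟩ := grow hconn _ F u hF_le hFa (le_refl _)
  have hleaf_sub : ∀ T' : SimpleGraph V, F ≤ T' →
      {z : V | (T'.neighborSet z).ncard = 1} ⊆ insert u (insert v (↑R : Set V)) := by
    intro T' hFT' z hz
    simp only [Set.mem_setOf_eq] at hz
    by_cases hzS : z ∈ p.support
    · by_cases hzu : z = u
      · exact Set.mem_insert_iff.mpr (Or.inl hzu)
      · by_cases hzv : z = v
        · exact Set.mem_insert_iff.mpr (Or.inr (Set.mem_insert_iff.mpr (Or.inl hzv)))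
        · exact absurd hz (hFdeg z hzS hzu hzv T' hFT')
    · refine Set.mem_insert_iff.mpr (Or.inr (Set.mem_insert_iff.mpr (Or.inr ?_)))
      rw [Finset.mem_coe, hR_def, Finset.mem_sdiff]
      exact ⟨Finset.mem_univ _, fun h => hzS (List.mem_toFinset.mp h)⟩
  have hLbound : {z : V | (T.neighborSet z).ncard = 1}.ncard ≤ 2 + R.card := by
    calc {z : V | (T.neighborSet z).ncard = 1}.ncard
        ≤ (insert u (insert v (↑R : Set V))).ncard :=
          Set.ncard_le_ncard (hleaf_sub T hFT) (Set.toFinite _)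
    _ ≤ (insert v (↑R : Set V)).ncard + 1 := Set.ncard_insert_le _ _
    _ ≤ ((↑R : Set V).ncard + 1) + 1 := by
          have := Set.ncard_insert_le v (↑R : Set V)
          omega
    _ = 2 + R.card := by rw [Set.ncard_coe_finset]; ring
  have hk1 : k + 1 ≤ {z : V | (T.neighborSet z).ncard = 1}.ncard := by
    by_contra h'
    push_neg at h'
    exact hnotree ⟨T, hTG, hTree, by omega⟩
  -- numerical consequences
  have hσuv := hσ u v huv hadjuv
  have hRk : R.card = k - 1 ∧ G.deg' u + G.deg' v = p.length := by
    have h10 : (Fintype.card V : ℤ) - k ≤ (G.deg' u : ℤ) + (G.deg' v : ℤ) := hσuv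
    have h11 : (G.deg' u : ℤ) + (G.deg' v : ℤ) ≤ p.length := by exact_mod_cast hle_m
    have h12 : k + 1 ≤ 2 + R.card := le_trans hk1 hLbound
    have h13 : R.card = Fintype.card V - (p.length + 1) := hRcard
    constructor
    · omega
    · omega
  have hRk1 : R.card = k - 1 := hRk.1
  have hdegsum : G.deg' u + G.deg' v = p.length := hRk.2
  have hIuv : Iu ∪ Iv = Finset.range p.length := by
    apply Finset.eq_of_subset_of_card_le hsub_range
    rw [hcard_union, Finset.card_range, hdegsum]
  have hdegx : G.deg' v ≤ G.deg' x := by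
    have h14 := hσ u x (Ne.symm hxu) (fun h => hxadju h.symm)
    have h15 : (Fintype.card V : ℤ) - k ≤ (G.deg' u : ℤ) + (G.deg' x : ℤ) := h14
    have h16 : R.card = Fintype.card V - (p.length + 1) := hRcard
    have : (G.deg' u : ℤ) + (G.deg' v : ℤ) = p.length := by exact_mod_cast hdegsum
    omega
  -- every neighbor of x lies on the path
  have huse2 : ∀ w, G.Adj x w → w ∈ p.support := by
    intro w hxw
    by_contra hwS
    have hxw_ne : x ≠ w := hxw.ne
    set F2 : SimpleGraph V := F ⊔ fromEdgeSet {s(x, w)} with hF2_def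
    have hxiso : ∀ t, ¬F.Adj x t := by
      intro t h
      rw [hF_def, fromEdgeSet_adj] at h
      exact hx (p.fst_mem_support_of_mem_edges h.1)
    have hF2a : F2.IsAcyclic := by
      apply addcross hFa hxw_ne
      rintro ⟨W'⟩
      exact hxw_ne (walk_isolated W' hxiso)
    have hF2G : F2 ≤ G := by
      refine sup_le hF_le ?_
      intro c d h
      rw [fromEdgeSet_adj, Set.mem_singleton_iff, Sym2.eq_iff] at h
      rcases h.1 with ⟨rfl, rfl⟩ | ⟨rfl, rfl⟩
      · exact hxw
      · exact hxw.symm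
    obtain ⟨T2, hFT2, hT2G, hTree2⟩ := grow hconn _ F2 u hF2G hF2a (le_refl _)
    have hF_le_T2 : F ≤ T2 := le_trans le_sup_left hFT2
    have hT2adj : T2.Adj x w := by
      apply hFT2
      rw [hF2_def]
      right
      rw [fromEdgeSet_adj]
      exact ⟨rfl, hxw_ne⟩
    have hnotboth : ¬((T2.neighborSet x).ncard = 1 ∧ (T2.neighborSet w).ncard = 1) := by
      rintro ⟨h1, h2⟩
      have hNx : T2.neighborSet x = {w} := by
        obtain ⟨aa, haa⟩ := Set.ncard_eq_one.mp h1
        have hmem : w ∈ T2.neighborSet x := hT2adj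
        rw [haa] at hmem
        rw [Set.mem_singleton_iff] at hmem
        rw [haa, hmem]
      have hNw : T2.neighborSet w = {x} := by
        obtain ⟨aa, haa⟩ := Set.ncard_eq_one.mp h2
        have hmem : x ∈ T2.neighborSet w := hT2adj.symm
        rw [haa] at hmem
        rw [Set.mem_singleton_iff] at hmem
        rw [haa, hmem]
      obtain ⟨W2⟩ := hTree2.isConnected.preconnected x u
      rcases walk_lock hNx hNw W2 (Or.inl rfl) with h | h
      · exact hxu h.symm
      · exact hwS (h ▸ p.start_mem_support)
    obtain ⟨c₀, hc₀S, hc₀nl⟩ : ∃ c₀, c₀ ∉ p.support ∧ (T2.neighborSet c₀).ncard ≠ 1 := by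
      by_cases hxleaf : (T2.neighborSet x).ncard = 1
      · exact ⟨w, hwS, fun h => hnotboth ⟨hxleaf, h⟩⟩
      · exact ⟨x, hx, hxleaf⟩
    have hc₀R : c₀ ∈ R := by
      rw [hR_def, Finset.mem_sdiff]
      exact ⟨Finset.mem_univ _, fun h => hc₀S (List.mem_toFinset.mp h)⟩
    have hleaf_sub2 : {z : V | (T2.neighborSet z).ncard = 1} ⊆
        insert u (insert v ((↑R : Set V) \ {c₀})) := by
      intro z hz
      have h17 := hleaf_sub T2 hF_le_T2 hz
      simp only [Set.mem_setOf_eq] at hz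
      rcases Set.mem_insert_iff.mp h17 with h | h
      · exact Set.mem_insert_iff.mpr (Or.inl h)
      · rcases Set.mem_insert_iff.mp h with h' | h'
        · exact Set.mem_insert_iff.mpr (Or.inr (Set.mem_insert_iff.mpr (Or.inl h')))
        · refine Set.mem_insert_iff.mpr (Or.inr (Set.mem_insert_iff.mpr (Or.inr ⟨h', ?_⟩)))
          rw [Set.mem_singleton_iff]
          rintro rfl
          exact hc₀nl hz
    have hRc : ((↑R : Set V) \ {c₀}).ncard = R.card - 1 := by
      rw [Set.ncard_diff_singleton_of_mem (Finset.mem_coe.mpr hc₀R),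
        Set.ncard_coe_finset]
    have hL2bound : {z : V | (T2.neighborSet z).ncard = 1}.ncard ≤ k := by
      calc {z : V | (T2.neighborSet z).ncard = 1}.ncard
          ≤ (insert u (insert v ((↑R : Set V) \ {c₀}))).ncard :=
            Set.ncard_le_ncard hleaf_sub2 (Set.toFinite _)
      _ ≤ (insert v ((↑R : Set V) \ {c₀})).ncard + 1 := Set.ncard_insert_le _ _
      _ ≤ (((↑R : Set V) \ {c₀}).ncard + 1) + 1 := by
            have := Set.ncard_insert_le v ((↑R : Set V) \ {c₀})
            omega
      _ ≤ k := by rw [hRc]; omega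
    exact hnotree ⟨T2, hT2G, hTree2, hL2bound⟩
  -- N(x) ⊆ N(v)
  have hsub : G.neighborSet x ⊆ G.neighborSet v := by
    intro t ht
    have htadj : G.Adj x t := ht
    have htS : t ∈ p.support := huse2 t htadj
    obtain ⟨j, hj, hjt⟩ := List.mem_iff_getElem.mp htS
    have hjm : j ≠ p.length := by
      rintro rfl
      apply hxadjv
      have : t = v := by rw [← hjt]; exact hSm
      rwa [this] at htadj
    have hjIuv : j ∈ Iu ∪ Iv := by
      rw [hIuv, Finset.mem_range]
      omega
    rcases Finset.mem_union.mp hjIuv with hj1 | hj2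
    · exfalso
      rw [hIu_def, Finset.mem_filter] at hj1
      have hadju' : G.Adj u (p.support[j+1]'(by omega)) := by
        rw [← List.getD_eq_getElem _ u (by omega : j + 1 < p.support.length)]
        exact hj1.2
      apply part1 j (by omega) hadju'
      rw [hjt]
      exact htadj
    · rw [hIv_def, Finset.mem_filter] at hj2
      have : G.Adj v t := by
        have h18 := hj2.2
        rwa [List.getD_eq_getElem _ u (by omega : j < p.support.length), hjt] at h18
      exact this
  exact ⟨part1, Set.eq_of_subset_of_ncard_le hsub hdegx (Set.toFinite _)⟩
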